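/- arXiv:2008.02721 — 2 statements merged into one kernel-verified Lean document; each statement's English description precedes it below -/
import Mathlib

section
/- Let 1 ≤ k ≤ n−1 and let W be any colored word on the set {n−k+1,…,n}. Then for every h ∈ {0,…,r−1} and every q ∈ ℂ, ∑_{π ∈ G_{r,n}(W)} χ_{1,h}(π) q^{fmaj(π)} = χ_{1,h}(W) · q^{fmaj(W)} · ∏_{j=k+1}^{n} [j·r]_{ζ^h q}. -/
open Finset

open scoped Classical

/-- `Flt x y` means `x <_F y` in the order on colored integers:
`(a,s) <_F (b,t)` iff `s > t`, or `s = t` and `a < b`. -/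
def Flt (x y : ℕ × ℕ) : Prop := y.2 < x.2 ∨ (x.2 = y.2 ∧ x.1 < y.1)

instance (x y : ℕ × ℕ) : Decidable (Flt x y) := by unfold Flt; infer_instance

/-- Inversion number of a list of naturals. -/
def invNum (l : List ℕ) : ℕ :=
  ∑ i ∈ Finset.range l.length, ∑ j ∈ Finset.range l.length,
    if i < j ∧ l.getD j 0 < l.getD i 0 then 1 else 0

/-- Sum of the colors of a colored word. -/
def colSum (l : List (ℕ × ℕ)) : ℕ := (l.map Prod.snd).sum

/-- The major index `maj_F` of a colored word: the sum of the
(1-indexed) positions `i` with `l_i >_F l_{i+1}`. -/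
def majF (l : List (ℕ × ℕ)) : ℕ :=
  ∑ i ∈ Finset.range (l.length - 1),
    if Flt (l.getD (i + 1) (0, 0)) (l.getD i (0, 0)) then i + 1 else 0

/-- The flag major index `fmaj = r·maj_F + col`. -/
def fmaj (r : ℕ) (l : List (ℕ × ℕ)) : ℕ := r * majF l + colSum l

/-- The list of absolute values of a colored word. -/
def absList (l : List (ℕ × ℕ)) : List ℕ := l.map Prod.fst

/-- The one-dimensional character value `χ_{ε,h}` of a colored word:
`ε^{inv(|W|)} · ζ^{h·col(W)}`. -/
noncomputable def chi (ε ζ : ℂ) (h : ℕ) (l : List (ℕ × ℕ)) : ℂ :=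
  ε ^ invNum (absList l) * ζ ^ (h * colSum l)

/-- `[m]_x = 1 + x + ⋯ + x^{m-1}`. -/
noncomputable def qnum (m : ℕ) (x : ℂ) : ℂ := ∑ i ∈ Finset.range m, x ^ i

/-- Colored permutations in `G_{r,n}`: a permutation of `Fin n` together with
a color in `Fin r` at each position. -/
abbrev GP (r n : ℕ) := Equiv.Perm (Fin n) × (Fin n → Fin r)

/-- The window notation of a colored permutation: the colored word whose `i`-th
entry is the value `π.1 i` (shifted to lie in `{1,…,n}`) with color `π.2 i`. -/
def window {r n : ℕ} (π : GP r n) : List (ℕ × ℕ) :=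
  (List.finRange n).map fun i => ((π.1 i : ℕ) + 1, (π.2 i : ℕ))

/-- `W` is a colored word on the finite set `A`: its absolute values are exactly
the elements of `A`, each used once, and all colors are in `{0,…,r-1}`. -/
def IsColoredWordOn (r : ℕ) (A : Finset ℕ) (W : List (ℕ × ℕ)) : Prop :=
  (W.map Prod.fst).Nodup ∧ (W.map Prod.fst).toFinset = A ∧ ∀ p ∈ W, p.2 < r

/-! ### auxiliary lemmas -/

lemma flt_trans {a b c : ℕ×ℕ} (h1 : Flt a b) (h2 : Flt b c) : Flt a c := by
  unfold Flt at *; omega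

lemma flt_total {a b : ℕ×ℕ} (h : a.1 < b.1) : Flt a b ↔ ¬ Flt b a := by
  unfold Flt; omega

lemma flt_cross {x u w : ℕ×ℕ} (hxu : x.1 < u.1) (h1 : Flt x w) (h2 : ¬ Flt u w) : Flt x u := by
  unfold Flt at *; omega

lemma getD_drop' (l : List (ℕ×ℕ)) (i j : ℕ) (d : ℕ×ℕ) :
    (l.drop i).getD j d = l.getD (i+j) d := by
  induction l generalizing i j with
  | nil => simp
  | cons a l ih =>
    cases i with
    | zero => simp
    | succ i =>
      show (l.drop i).getD j d = (a::l).getD (i+1+j) d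
      rw [show i+1+j = (i+j)+1 from by omega, List.getD_cons_succ, ih]

lemma insertIdx_eq (l : List (ℕ×ℕ)) (i : ℕ) (x : ℕ×ℕ) (h : i ≤ l.length) :
    l.insertIdx i x = l.take i ++ x :: l.drop i := by
  induction l generalizing i with
  | nil =>
    have : i = 0 := by simpa using h
    subst this; simp
  | cons a l ih =>
    cases i with
    | zero => simp
    | succ i => simp [List.insertIdx_succ_cons, ih _ (by simpa using h)]

lemma length_insertIdx' (l : List (ℕ×ℕ)) (i : ℕ) (x : ℕ×ℕ) (h : i ≤ l.length) :
    (l.insertIdx i x).length = l.length + 1 :=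
  List.length_insertIdx_of_le_length h x

lemma insertIdx_append_singleton (l : List (ℕ×ℕ)) (u x : ℕ×ℕ) (i : ℕ) (h : i ≤ l.length) :
    (l ++ [u]).insertIdx i x = l.insertIdx i x ++ [u] := by
  rw [insertIdx_eq _ _ _ h, insertIdx_eq _ _ _ (by simp; omega),
      List.take_append_of_le_length h, List.drop_append_of_le_length h]
  simp

lemma majF_append (W : List (ℕ×ℕ)) (u : ℕ×ℕ) :
    majF (W ++ [u]) = majF W +
      (if Flt u (W.getD (W.length - 1) (0,0)) ∧ W ≠ [] then W.length else 0) := by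
  rcases eq_or_ne W [] with rfl | hW
  · simp [majF]
  · obtain ⟨m, hm⟩ : ∃ m, W.length = m + 1 := by
      have := List.length_pos_iff.mpr hW; exact ⟨W.length - 1, by omega⟩
    have hlen : (W ++ [u]).length = m + 2 := by simp [hm]
    rw [majF, majF, hlen, hm]
    rw [show m + 2 - 1 = m + 1 from rfl, show m + 1 - 1 = m from rfl, Finset.sum_range_succ]
    congr 1
    · refine Finset.sum_congr rfl fun i hi => ?_
      have hi' : i < m := Finset.mem_range.mp hi
      rw [List.getD_append _ _ _ _ (by omega), List.getD_append _ _ _ _ (by omega)]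
    · rw [List.getD_append_right _ _ _ _ (by omega), List.getD_append _ _ _ _ (by omega)]
      have : m + 1 - W.length = 0 := by omega
      rw [this]
      simp [hW, hm]

lemma colSum_insertIdx (l : List (ℕ×ℕ)) (i : ℕ) (x : ℕ×ℕ) (h : i ≤ l.length) :
    colSum (l.insertIdx i x) = colSum l + x.2 := by
  have hp := List.perm_insertIdx x l h
  have : colSum (l.insertIdx i x) = colSum (x :: l) := by
    unfold colSum
    exact List.Perm.sum_eq (hp.map Prod.snd)
  rw [this]; unfold colSum; simp; ring
lemma getD_insertIdx_last (l : List (ℕ×ℕ)) (x : ℕ×ℕ) (i : ℕ) (hi : i < l.length) :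
    (l.insertIdx i x).getD l.length (0,0) = l.getD (l.length - 1) (0,0) := by
  rw [insertIdx_eq _ _ _ hi.le]
  have ht : (l.take i).length = i := by rw [List.length_take]; omega
  rw [List.getD_append_right _ _ _ _ (by rw [ht]; omega), ht,
      show l.length - i = (l.length - i - 1) + 1 from by omega, List.getD_cons_succ, getD_drop']
  congr 1
  omega

lemma ins_maj_sum (t : ℂ) (x : ℕ×ℕ) (V : List (ℕ×ℕ)) (hx : ∀ v ∈ V, x.1 < v.1) :
    ∑ i ∈ Finset.range (V.length + 1), t ^ majF (V.insertIdx i x)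
      = t ^ majF V * ∑ d ∈ Finset.range (V.length + 1), t ^ d := by
  induction V using List.reverseRecOn with
  | nil => simp [majF]
  | append_singleton U u IH =>
    have hxu : x.1 < u.1 := hx u (by simp)
    have IH' := IH (fun v hv => hx v (by simp [hv]))
    have hlen : (U ++ [u]).length = U.length + 1 := by simp
    rw [hlen, Finset.sum_range_succ, Finset.sum_range_succ]
    have e1 : (U ++ [u]).insertIdx (U.length + 1) x = (U ++ [u]) ++ [x] := by
      rw [← hlen]; exact List.insertIdx_length_self
    have e2 : (U ++ [u]).insertIdx U.length x = (U ++ [x]) ++ [u] := by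
      rw [insertIdx_append_singleton _ _ _ _ (le_refl U.length), List.insertIdx_length_self]
    -- the four boolean parameters
    set w := U.getD (U.length - 1) (0,0) with hw
    have hU0 : U = [] → U.length = 0 := fun h => by simp [h]
    -- majF values
    have m1 : majF ((U ++ [x]) ++ [u])
        = majF U + (if Flt x w ∧ U ≠ [] then U.length else 0)
            + (if Flt u x then U.length + 1 else 0) := by
      rw [majF_append (U ++ [x]) u, majF_append U x]
      congr 1
      have : (U ++ [x]).getD ((U ++ [x]).length - 1) (0,0) = x := by
        simp only [List.length_append, List.length_singleton, Nat.add_sub_cancel]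
        rw [List.getD_append_right _ _ _ _ (le_refl _), Nat.sub_self]; rfl
      rw [this]
      simp
    have m2 : majF ((U ++ [u]) ++ [x])
        = majF U + (if Flt u w ∧ U ≠ [] then U.length else 0)
            + (if Flt x u then U.length + 1 else 0) := by
      rw [majF_append (U ++ [u]) x, majF_append U u]
      congr 1
      have : (U ++ [u]).getD ((U ++ [u]).length - 1) (0,0) = u := by
        simp only [List.length_append, List.length_singleton, Nat.add_sub_cancel]
        rw [List.getD_append_right _ _ _ _ (le_refl _), Nat.sub_self]; rfl
      rw [this]
      simp
    have e3 : ∀ i ∈ Finset.range U.length, t ^ majF ((U ++ [u]).insertIdx i x)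
        = t ^ majF (U.insertIdx i x) * t ^ (if Flt u w ∧ U ≠ [] then U.length + 1 else 0) := by
      intro i hi
      have hi' : i < U.length := Finset.mem_range.mp hi
      have hU : U ≠ [] := by intro h; rw [h] at hi'; simp at hi'
      rw [insertIdx_append_singleton _ _ _ _ hi'.le, majF_append, ← pow_add]
      congr 2
      have hli : (U.insertIdx i x).length = U.length + 1 := length_insertIdx' U i x hi'.le
      have hne : U.insertIdx i x ≠ [] := by
        intro hc; rw [hc] at hli; simp at hli
      rw [hli, show U.length + 1 - 1 = U.length from rfl, getD_insertIdx_last U x i hi']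
      simp [hne, hU, hw]
    rw [Finset.sum_congr rfl e3, ← Finset.sum_mul]
    have e4 : ∑ i ∈ Finset.range U.length, t ^ majF (U.insertIdx i x)
        = t ^ majF U * (∑ d ∈ Finset.range (U.length + 1), t ^ d)
          - t ^ majF ((U ++ [x])) := by
      have hsum := Finset.sum_range_succ (fun i => t ^ majF (U.insertIdx i x)) U.length
      simp only [List.insertIdx_length_self] at hsum
      rw [IH'] at hsum
      linear_combination -hsum
    have m3 : majF (U ++ [x]) = majF U + (if Flt x w ∧ U ≠ [] then U.length else 0) :=
      majF_append U x
    have m4 : majF (U ++ [u]) = majF U + (if Flt u w ∧ U ≠ [] then U.length else 0) :=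
      majF_append U u
    rw [e4, e1, e2, m1, m2, m3, m4]
    -- now pure algebra with booleans
    have hS2' : (∑ d ∈ Finset.range (U.length + 1 + 1), t ^ d)
        = 1 + t * ∑ d ∈ Finset.range (U.length + 1), t ^ d := by
      rw [Finset.sum_range_succ' (fun d => t ^ d)]
      rw [Finset.mul_sum]
      simp only [pow_succ']
      ring
    have hS2'' : (∑ d ∈ Finset.range (U.length + 1 + 1), t ^ d)
        = (∑ d ∈ Finset.range (U.length + 1), t ^ d) + t ^ (U.length + 1) :=
      Finset.sum_range_succ _ _
    by_cases hFp : Flt x u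
    · have hE : ¬ Flt u x := by
        have := (flt_total hxu).mp hFp; exact this
      by_cases hA : Flt u w ∧ U ≠ []
      · have hB : Flt x w ∧ U ≠ [] := ⟨flt_trans hFp hA.1, hA.2⟩
        simp only [eq_true hA, eq_true hB, eq_false hE, eq_true hFp, if_true, if_false]
        rw [hS2']
        ring
      · simp only [eq_false hA, eq_false hE, eq_true hFp, if_true, if_false]
        rw [hS2'']
        ring
    · have hE : Flt u x := by
        by_contra hc
        exact hFp ((flt_total hxu).mpr hc)
      by_cases hA : Flt u w ∧ U ≠ []
      · simp only [eq_true hA, eq_true hE, eq_false hFp, if_true, if_false]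
        rw [hS2']
        ring
      · have hB : ¬ (Flt x w ∧ U ≠ []) := by
          rintro ⟨hb, hne⟩
          have hnA : ¬ Flt u w := fun hc => hA ⟨hc, hne⟩
          exact hFp (flt_cross hxu hb hnA)
        simp only [eq_false hA, eq_false hB, eq_true hE, eq_false hFp, if_true, if_false]
        rw [hS2'']
        ring
noncomputable def F (r h : ℕ) (ζ q : ℂ) : ℕ → List (ℕ × ℕ) → ℂ
  | 0, W => ζ ^ (h * colSum W) * q ^ fmaj r W
  | m+1, W => ∑ c ∈ Finset.range r, ∑ i ∈ Finset.range (W.length + 1),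
      F r h ζ q m (W.insertIdx i (m+1, c))

lemma qnum_block (N r : ℕ) (x : ℂ) :
    qnum (N*r) x = (∑ d ∈ Finset.range N, (x^r)^d) * (∑ c ∈ Finset.range r, x^c) := by
  induction N with
  | zero => simp [qnum]
  | succ N IH =>
    rw [show (N+1)*r = N*r + r from by ring]
    unfold qnum at *
    rw [Finset.sum_range_add, IH, Finset.sum_range_succ, add_mul]
    congr 1
    rw [Finset.mul_sum]
    refine Finset.sum_congr rfl fun c _ => ?_
    rw [pow_add, ← pow_mul, mul_comm N r, pow_mul]

lemma F_eval (r h : ℕ) (ζ q : ℂ) (hζr : ζ ^ r = 1) :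
    ∀ (m : ℕ) (V : List (ℕ×ℕ)), (∀ v ∈ V, m < v.1) →
    F r h ζ q m V = ζ^(h*colSum V) * q^(fmaj r V) *
      ∏ j ∈ Finset.range m, qnum ((V.length + 1 + j)*r) (ζ^h*q) := by
  intro m
  induction m with
  | zero => intro V _; simp [F]
  | succ m IH =>
    intro V hV
    rw [F]
    have hterm : ∀ c ∈ Finset.range r, (∑ i ∈ Finset.range (V.length + 1),
        F r h ζ q m (V.insertIdx i (m+1, c)))
        = (ζ^h*q)^c *
            (ζ^(h*colSum V) * q^(colSum V)
              * ((q^r)^(majF V) * ∑ d ∈ Finset.range (V.length+1), (q^r)^d)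
              * ∏ j ∈ Finset.range m, qnum ((V.length + 2 + j)*r) (ζ^h*q)) := by
      intro c hc
      have e : ∀ i ∈ Finset.range (V.length + 1),
          F r h ζ q m (V.insertIdx i (m+1,c))
          = ((ζ^h*q)^c * (ζ^(h*colSum V) * q^(colSum V)
              * ∏ j ∈ Finset.range m, qnum ((V.length + 2 + j)*r) (ζ^h*q)))
            * (q^r)^(majF (V.insertIdx i (m+1,c))) := by
        intro i hi
        have hi' : i ≤ V.length := Nat.lt_succ_iff.mp (Finset.mem_range.mp hi)
        have hlen : (V.insertIdx i (m+1,c)).length = V.length + 1 :=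
          length_insertIdx' _ _ _ hi'
        have hmem : ∀ v ∈ V.insertIdx i (m+1,c), m < v.1 := by
          intro v hv
          have hv' := (List.perm_insertIdx (m+1,c) V hi').mem_iff.mp hv
          rcases List.mem_cons.mp hv' with h' | h'
          · rw [h']; exact Nat.lt_succ_self m
          · exact lt_trans (Nat.lt_succ_self m) (hV v h')
        rw [IH _ hmem, hlen]
        unfold fmaj
        rw [colSum_insertIdx _ _ _ hi',
            show V.length + 1 + 1 = V.length + 2 from rfl]
        simp only [pow_add, pow_mul, mul_add, mul_pow]
        ring
      rw [Finset.sum_congr rfl e, ← Finset.mul_sum,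
          ins_maj_sum (q^r) (m+1,c) V (fun v hv => hV v hv)]
      ring
    rw [Finset.sum_congr rfl hterm, ← Finset.sum_mul]
    rw [Finset.prod_range_succ' (fun j => qnum ((V.length+1+j)*r) (ζ^h*q)) m]
    simp only [show ∀ j, V.length+1+(j+1) = V.length+2+j from fun j => by omega]
    rw [show V.length+1+0 = V.length+1 from rfl]
    rw [qnum_block (V.length+1) r (ζ^h*q)]
    have hxr : (ζ^h*q)^r = q^r := by
      rw [mul_pow, ← pow_mul, mul_comm h r, pow_mul, hζr, one_pow, one_mul]
    rw [hxr]
    rw [show fmaj r V = r * majF V + colSum V from rfl, pow_add, pow_mul]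
    ring
lemma window_length {r n : ℕ} (π : GP r n) : (window π).length = n := by simp [window]

lemma window_map_fst {r n : ℕ} (π : GP r n) :
    (window π).map Prod.fst = (List.finRange n).map (fun i => (π.1 i : ℕ) + 1) := by
  simp [window, Function.comp]

lemma window_fst_nodup {r n : ℕ} (π : GP r n) : ((window π).map Prod.fst).Nodup := by
  rw [window_map_fst]
  refine List.Nodup.map ?_ (List.nodup_finRange n)
  intro a b hab
  dsimp only at hab
  have h1 : (π.1 a : ℕ) = π.1 b := by omega
  exact π.1.injective (Fin.ext h1)

lemma window_fst_toFinset {r n : ℕ} (π : GP r n) :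
    ((window π).map Prod.fst).toFinset = Finset.Icc 1 n := by
  ext a
  rw [window_map_fst]
  simp only [List.mem_toFinset, List.mem_map, List.mem_finRange, true_and, Finset.mem_Icc]
  constructor
  · rintro ⟨i, rfl⟩; have := (π.1 i).isLt; omega
  · rintro ⟨h1, h2⟩
    refine ⟨π.1.symm ⟨a-1, by omega⟩, ?_⟩
    rw [Equiv.apply_symm_apply]
    simp; omega

lemma window_colors {r n : ℕ} (π : GP r n) : ∀ p ∈ window π, p.2 < r := by
  intro p hp
  simp only [window, List.mem_map, List.mem_finRange, true_and] at hp
  obtain ⟨i, rfl⟩ := hp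
  exact (π.2 i).isLt

lemma window_getD {r n : ℕ} (π : GP r n) (i : ℕ) (hi : i < n) :
    (window π).getD i (0,0) = ((π.1 ⟨i,hi⟩ : ℕ) + 1, (π.2 ⟨i,hi⟩ : ℕ)) := by
  have h1 : i < (window π).length := by rw [window_length]; exact hi
  rw [List.getD_eq_getElem _ _ h1]
  simp [window, List.getElem_map, List.getElem_finRange]

lemma window_injective {r n : ℕ} : Function.Injective (window (r:=r) (n:=n)) := by
  intro π π' hww
  have hg : ∀ i : Fin n, π.1 i = π'.1 i ∧ π.2 i = π'.2 i := by
    intro i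
    have h1 := congrArg (fun l => l.getD (i : ℕ) (0,0)) hww
    simp only [window_getD _ _ i.isLt, Fin.eta] at h1
    rw [Prod.mk.injEq] at h1
    constructor
    · apply Fin.ext; omega
    · apply Fin.ext; omega
  ext i
  · exact congrArg Fin.val (hg i).1
  · exact congrArg Fin.val (hg i).2

lemma window_surj {r n : ℕ} (V : List (ℕ×ℕ)) (h1 : (V.map Prod.fst).Nodup)
    (h2 : (V.map Prod.fst).toFinset = Finset.Icc 1 n) (h3 : ∀ p ∈ V, p.2 < r) :
    ∃ π : GP r n, window π = V := by
  have hlen : V.length = n := by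
    have hc := List.toFinset_card_of_nodup h1
    rw [h2] at hc
    simp only [Nat.card_Icc, List.length_map] at hc
    omega
  have hmem : ∀ p ∈ V, 1 ≤ p.1 ∧ p.1 ≤ n := by
    intro p hp
    have hmm : p.1 ∈ (V.map Prod.fst).toFinset := by
      rw [List.mem_toFinset, List.mem_map]; exact ⟨p, hp, rfl⟩
    rw [h2, Finset.mem_Icc] at hmm
    exact hmm
  have hVi : ∀ i : Fin n, (i : ℕ) < V.length := fun i => by rw [hlen]; exact i.isLt
  let g : Fin n → Fin n := fun i => ⟨(V[(i:ℕ)]'(hVi i)).1 - 1, by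
    have := hmem _ (V.getElem_mem (hVi i)); omega⟩
  have hginj : Function.Injective g := by
    intro a b hab
    have h1' : (V[(a:ℕ)]'(hVi a)).1 - 1 = (V[(b:ℕ)]'(hVi b)).1 - 1 :=
      congrArg Fin.val hab
    have ha := hmem _ (V.getElem_mem (hVi a))
    have hb := hmem _ (V.getElem_mem (hVi b))
    have h2' : (V[(a:ℕ)]'(hVi a)).1 = (V[(b:ℕ)]'(hVi b)).1 := by omega
    have h3' : (V.map Prod.fst)[(a:ℕ)]'(by simpa using hVi a)
        = (V.map Prod.fst)[(b:ℕ)]'(by simpa using hVi b) := by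
      simpa [List.getElem_map] using h2'
    have h4' := (List.Nodup.getElem_inj_iff h1).mp h3'
    exact Fin.ext h4'
  have hgbij : Function.Bijective g := (Finite.injective_iff_bijective).mp hginj
  let z : Fin n → Fin r := fun i => ⟨(V[(i:ℕ)]'(hVi i)).2, h3 _ (V.getElem_mem (hVi i))⟩
  refine ⟨(Equiv.ofBijective g hgbij, z), ?_⟩
  apply List.ext_getElem (by rw [window_length, hlen])
  intro i hi1 hi2
  have hi3 : i < n := by rwa [window_length] at hi1
  show (window (Equiv.ofBijective g hgbij, z))[i] = V[i]
  have : (window (Equiv.ofBijective g hgbij, z))[i]'hi1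
      = ((g ⟨i,hi3⟩ : ℕ) + 1, (z ⟨i,hi3⟩ : ℕ)) := by
    simp [window, List.getElem_map, List.getElem_finRange]
  rw [this]
  have hmV := hmem _ (V.getElem_mem hi2)
  show ((V[i]'hi2).1 - 1 + 1, (V[i]'hi2).2) = V[i]'hi2
  have : (V[i]'hi2).1 - 1 + 1 = (V[i]'hi2).1 := by omega
  rw [this]
def res (m : ℕ) (U : List (ℕ×ℕ)) : List (ℕ×ℕ) := U.filter (fun p => decide (m < p.1))

def gC (m : ℕ) (U : List (ℕ×ℕ)) : ℕ :=
  (((res m U).find? (fun p => decide (p.1 = m+1))).getD (0,0)).2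

def gI (m : ℕ) (U : List (ℕ×ℕ)) : ℕ :=
  ((res m U).takeWhile (fun p => decide (¬ p.1 = m+1))).length

lemma res_step (m : ℕ) (U : List (ℕ×ℕ)) :
    (res m U).filter (fun p => decide (m+1 < p.1)) = res (m+1) U := by
  rw [res, res, List.filter_filter]
  refine List.filter_congr fun a _ => ?_
  by_cases hcase : m+1 < a.1
  · simp [hcase, Nat.lt_of_succ_lt hcase]
  · simp [hcase]

lemma filter_insertIdx_out (m c : ℕ) (V : List (ℕ×ℕ)) (i : ℕ) (hi : i ≤ V.length)
    (hV : ∀ p ∈ V, m+1 < p.1) :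
    (V.insertIdx i (m+1,c)).filter (fun p => decide (m+1 < p.1)) = V := by
  rw [insertIdx_eq _ _ _ hi, List.filter_append, List.filter_cons]
  have hx : (decide (m+1 < ((m+1,c) : ℕ×ℕ).1)) = false := by simp
  rw [hx]
  simp only [Bool.false_eq_true, if_false]
  rw [List.filter_eq_self.mpr (fun a ha => by
        simp only [decide_eq_true_eq]; exact hV a (List.take_subset _ _ ha)),
      List.filter_eq_self.mpr (fun a ha => by
        simp only [decide_eq_true_eq]; exact hV a (List.drop_subset _ _ ha))]
  exact List.take_append_drop i V

lemma find?_mid (P : ℕ×ℕ → Bool) (l₁ l₂ : List (ℕ×ℕ)) (x : ℕ×ℕ)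
    (h1 : ∀ a ∈ l₁, P a = false) (hx : P x = true) :
    (l₁ ++ x :: l₂).find? P = some x := by
  induction l₁ with
  | nil => simp [List.find?_cons, hx]
  | cons a l ih =>
    rw [List.cons_append, List.find?_cons]
    rw [h1 a (by simp)]
    exact ih (fun b hb => h1 b (by simp [hb]))

lemma takeWhile_mid (P : ℕ×ℕ → Bool) (l₁ l₂ : List (ℕ×ℕ)) (x : ℕ×ℕ)
    (h1 : ∀ a ∈ l₁, P a = true) (hx : P x = false) :
    (l₁ ++ x :: l₂).takeWhile P = l₁ := by
  induction l₁ with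
  | nil => simp [List.takeWhile_cons, hx]
  | cons a l ih =>
    rw [List.cons_append, List.takeWhile_cons, h1 a (by simp),
        ih (fun b hb => h1 b (by simp [hb]))]
    simp

lemma res_decomp (m : ℕ) (U : List (ℕ×ℕ)) (hnd : (U.map Prod.fst).Nodup)
    (hm : m+1 ∈ U.map Prod.fst) :
    ∃ p₀, p₀ ∈ U ∧ p₀.1 = m+1 ∧ gC m U = p₀.2 ∧ gI m U ≤ (res (m+1) U).length ∧
      res m U = (res (m+1) U).insertIdx (gI m U) p₀ := by
  obtain ⟨p₀, hp₀U, hp₀1⟩ := List.mem_map.mp hm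
  have hp₀res : p₀ ∈ res m U :=
    List.mem_filter.mpr ⟨hp₀U, by simp [hp₀1]⟩
  obtain ⟨l₁, l₂, hdec⟩ := List.append_of_mem hp₀res
  have hndres : ((res m U).map Prod.fst).Nodup :=
    ((List.filter_sublist (l := U)).map Prod.fst).nodup hnd
  have hmemres : ∀ a ∈ res m U, m < a.1 := fun a ha => by
    have := (List.mem_filter.mp ha).2; simpa using this
  have hne : ∀ a, (a ∈ l₁ ∨ a ∈ l₂) → m+1 < a.1 := by
    intro a haor
    have haU : a ∈ res m U := by rw [hdec]; rcases haor with h'|h' <;> simp [h']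
    have h1 := hmemres a haU
    rcases Nat.lt_or_ge (m+1) a.1 with h'|h'
    · exact h'
    · exfalso
      have ha1 : a.1 = p₀.1 := by omega
      rw [hdec, List.map_append, List.map_cons] at hndres
      obtain ⟨hn1, hn2, hdisj⟩ := List.nodup_append'.mp hndres
      rcases haor with hmem1 | hmem2
      · exact hdisj (List.mem_map.mpr ⟨a, hmem1, rfl⟩) (ha1 ▸ List.mem_cons_self)
      · have := (List.nodup_cons.mp hn2).1
        exact this (ha1 ▸ List.mem_map.mpr ⟨a, hmem2, rfl⟩)
  have hres1 : res (m+1) U = l₁ ++ l₂ := by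
    rw [← res_step, hdec, List.filter_append, List.filter_cons]
    have hp : (decide (m+1 < p₀.1)) = false := by simp [hp₀1]
    rw [hp]
    simp only [Bool.false_eq_true, if_false]
    rw [List.filter_eq_self.mpr (fun a ha => by
          simp only [decide_eq_true_eq]; exact hne a (Or.inl ha)),
        List.filter_eq_self.mpr (fun a ha => by
          simp only [decide_eq_true_eq]; exact hne a (Or.inr ha))]
  have hgI : gI m U = l₁.length := by
    rw [gI, hdec, takeWhile_mid]
    · intro a ha
      have := hne a (Or.inl ha)
      simp only [decide_eq_true_eq]
      omega
    · simp [hp₀1]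
  have hgC : gC m U = p₀.2 := by
    rw [gC, hdec, find?_mid]
    · rfl
    · intro a ha
      have := hne a (Or.inl ha)
      simp only [decide_eq_false_iff_not]
      omega
    · simp [hp₀1]
  refine ⟨p₀, hp₀U, hp₀1, hgC, ?_, ?_⟩
  · rw [hgI, hres1]; simp
  · rw [hgI, hres1, hdec, insertIdx_eq _ _ _ (by simp), List.take_left, List.drop_left]

lemma g_of_insert (m c i : ℕ) (V U : List (ℕ×ℕ)) (hi : i ≤ V.length)
    (hV2 : ∀ p ∈ V, m+1 < p.1)
    (hU : res m U = V.insertIdx i (m+1,c)) :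
    res (m+1) U = V ∧ gC m U = c ∧ gI m U = i := by
  have h1 : res (m+1) U = V := by
    rw [← res_step, hU, filter_insertIdx_out m c V i hi hV2]
  refine ⟨h1, ?_, ?_⟩
  · rw [gC, hU, insertIdx_eq _ _ _ hi, find?_mid]
    · rfl
    · intro a ha
      have := hV2 a (List.take_subset _ _ ha)
      simp only [decide_eq_false_iff_not]
      omega
    · simp
  · rw [gI, hU, insertIdx_eq _ _ _ hi, takeWhile_mid]
    · rw [List.length_take]; omega
    · intro a ha
      have := hV2 a (List.take_subset _ _ ha)
      simp only [decide_eq_true_eq]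
      omega
    · simp

lemma main_sum (r n h : ℕ) (ζ q : ℂ) :
    ∀ (m : ℕ) (V : List (ℕ×ℕ)), m ≤ n →
    (V.map Prod.fst).Nodup → (V.map Prod.fst).toFinset = Finset.Icc (m+1) n →
    (∀ p ∈ V, p.2 < r) →
    (∑ U ∈ ((Finset.univ : Finset (GP r n)).image window).filter (fun U => res m U = V),
        ζ^(h*colSum U) * q^(fmaj r U))
      = F r h ζ q m V := by
  intro m
  induction m with
  | zero =>
    intro V hm hnd htf hcol
    have hres0 : ∀ π : GP r n, res 0 (window π) = window π := by
      intro π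
      refine List.filter_eq_self.mpr fun a ha => ?_
      have hmm : a.1 ∈ ((window π).map Prod.fst).toFinset := by
        rw [List.mem_toFinset, List.mem_map]; exact ⟨a, ha, rfl⟩
      rw [window_fst_toFinset, Finset.mem_Icc] at hmm
      simp only [decide_eq_true_eq]
      omega
    have hset : ((Finset.univ : Finset (GP r n)).image window).filter (fun U => res 0 U = V)
        = {V} := by
      ext U
      simp only [Finset.mem_filter, Finset.mem_singleton, Finset.mem_image, Finset.mem_univ,
        true_and]
      constructor
      · rintro ⟨⟨π, rfl⟩, hres⟩
        rw [← hres, hres0]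
      · rintro rfl
        obtain ⟨π, hπ⟩ := window_surj U hnd (by simpa using htf) hcol
        exact ⟨⟨π, hπ⟩, by rw [← hπ, hres0]⟩
    rw [hset, Finset.sum_singleton]
    rfl
  | succ m IH =>
    intro V hm hnd htf hcol
    have hV2 : ∀ p ∈ V, m+1 < p.1 := by
      intro p hp
      have hmm : p.1 ∈ (V.map Prod.fst).toFinset := by
        rw [List.mem_toFinset, List.mem_map]; exact ⟨p, hp, rfl⟩
      rw [htf, Finset.mem_Icc] at hmm
      omega
    have hm1V : (m+1) ∉ V.map Prod.fst := by
      intro hc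
      have hmm : m+1 ∈ (V.map Prod.fst).toFinset := List.mem_toFinset.mpr hc
      rw [htf, Finset.mem_Icc] at hmm; omega
    rw [F]
    have hstep : ∀ c ∈ Finset.range r, ∀ i ∈ Finset.range (V.length+1),
        F r h ζ q m (V.insertIdx i (m+1,c))
        = ∑ U ∈ ((Finset.univ : Finset (GP r n)).image window).filter
            (fun U => res m U = V.insertIdx i (m+1,c)),
            ζ^(h*colSum U) * q^(fmaj r U) := by
      intro c hc i hi
      have hi' : i ≤ V.length := Nat.lt_succ_iff.mp (Finset.mem_range.mp hi)
      have hperm := (List.perm_insertIdx (m+1,c) V hi').map Prod.fst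
      refine (IH _ (by omega) ?_ ?_ ?_).symm
      · rw [hperm.nodup_iff]
        exact List.nodup_cons.mpr ⟨hm1V, hnd⟩
      · ext a
        simp only [List.mem_toFinset, hperm.mem_iff, List.map_cons, List.mem_cons, Finset.mem_Icc]
        constructor
        · rintro (rfl | hmem)
          · omega
          · have hmm : a ∈ (V.map Prod.fst).toFinset := List.mem_toFinset.mpr hmem
            rw [htf, Finset.mem_Icc] at hmm; omega
        · intro hIcc
          by_cases hcase : a = m+1
          · left; exact hcase
          · right
            have hmm : a ∈ Finset.Icc (m+1+1) n := Finset.mem_Icc.mpr (by omega)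
            rw [← htf] at hmm
            exact List.mem_toFinset.mp hmm
      · intro p hp
        rcases List.mem_cons.mp ((List.perm_insertIdx (m+1,c) V hi').mem_iff.mp hp) with h'|h'
        · rw [h']; exact Finset.mem_range.mp hc
        · exact hcol p h'
    rw [Finset.sum_congr rfl (fun c hc => Finset.sum_congr rfl (hstep c hc)),
        ← Finset.sum_product']
    have hmaps : ∀ U ∈ ((Finset.univ : Finset (GP r n)).image window).filter
        (fun U => res (m+1) U = V),
        (gC m U, gI m U) ∈ Finset.range r ×ˢ Finset.range (V.length + 1) := by
      intro U hU
      obtain ⟨hUA, hUres⟩ := Finset.mem_filter.mp hU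
      obtain ⟨π, -, rfl⟩ := Finset.mem_image.mp hUA
      have hmemw : m+1 ∈ (window π).map Prod.fst := by
        rw [← List.mem_toFinset, window_fst_toFinset, Finset.mem_Icc]; omega
      obtain ⟨p₀, hp₀U, hp₀1, hgC, hgI, hrdec⟩ :=
        res_decomp m (window π) (window_fst_nodup π) hmemw
      rw [Finset.mem_product, Finset.mem_range, Finset.mem_range]
      constructor
      · rw [hgC]; exact window_colors π p₀ hp₀U
      · rw [hUres] at hgI
        omega
    rw [← Finset.sum_fiberwise_of_maps_to hmaps (fun U => ζ^(h*colSum U) * q^(fmaj r U))]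
    refine Finset.sum_congr rfl fun p hp => ?_
    rw [Finset.mem_product, Finset.mem_range, Finset.mem_range] at hp
    congr 1
    ext U
    simp only [Finset.mem_filter, Finset.mem_image, Finset.mem_univ, true_and]
    constructor
    · rintro ⟨⟨⟨π, rfl⟩, hres⟩, hgq⟩
      refine ⟨⟨π, rfl⟩, ?_⟩
      have hmemw : m+1 ∈ (window π).map Prod.fst := by
        rw [← List.mem_toFinset, window_fst_toFinset, Finset.mem_Icc]; omega
      obtain ⟨p₀, hp₀U, hp₀1, hgC, hgI, hrdec⟩ :=
        res_decomp m (window π) (window_fst_nodup π) hmemw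
      have h1' : gC m (window π) = p.1 := congrArg Prod.fst hgq
      have h2' : gI m (window π) = p.2 := congrArg Prod.snd hgq
      have hp₀eq : p₀ = (m+1, p.1) := by
        apply Prod.ext_iff.mpr
        exact ⟨hp₀1, by rw [← h1', hgC]⟩
      rw [hrdec, hres, h2', hp₀eq]
    · rintro ⟨⟨π, rfl⟩, hres⟩
      have hg := g_of_insert m p.1 p.2 V (window π) (by omega) hV2 hres
      exact ⟨⟨⟨π, rfl⟩, hg.1⟩, by rw [Prod.ext_iff]; exact ⟨hg.2.1, hg.2.2⟩⟩
lemma map_fst_res (m : ℕ) (U : List (ℕ×ℕ)) :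
    (res m U).map Prod.fst = (U.map Prod.fst).filter (fun a => decide (m < a)) := by
  induction U with
  | nil => rfl
  | cons a l ih =>
    simp only [res] at ih ⊢
    rw [List.filter_cons, List.map_cons, List.filter_cons]
    by_cases hcase : m < a.1
    · rw [if_pos (by simpa using hcase), if_pos (by simpa using hcase), List.map_cons, ih]
    · rw [if_neg (by simpa using hcase), if_neg (by simpa using hcase), ih]

lemma sublist_iff_res (n k : ℕ) (hk1 : 1 ≤ k) (hkn : k ≤ n) (W U : List (ℕ×ℕ))
    (hWtf : (W.map Prod.fst).toFinset = Finset.Icc (n-k+1) n)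
    (hWnd : (W.map Prod.fst).Nodup)
    (hUnd : (U.map Prod.fst).Nodup) (hUtf : (U.map Prod.fst).toFinset = Finset.Icc 1 n) :
    W.Sublist U ↔ res (n-k) U = W := by
  constructor
  · intro hsub
    have hWp : ∀ p ∈ W, ((fun p : ℕ×ℕ => decide (n-k < p.1)) p) = true := by
      intro p hp
      have hmm : p.1 ∈ (W.map Prod.fst).toFinset := by
        rw [List.mem_toFinset, List.mem_map]; exact ⟨p, hp, rfl⟩
      rw [hWtf, Finset.mem_Icc] at hmm
      simp only [decide_eq_true_eq]; omega
    have hWf : W.filter (fun p => decide (n-k < p.1)) = W := List.filter_eq_self.mpr hWp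
    have hsub2 : W.Sublist (res (n-k) U) := by
      rw [← hWf]; exact hsub.filter _
    have hlW : W.length = k := by
      have hc := List.toFinset_card_of_nodup hWnd
      rw [hWtf] at hc
      simp only [Nat.card_Icc, List.length_map] at hc
      omega
    have hlres : (res (n-k) U).length = k := by
      have hndres : ((res (n-k) U).map Prod.fst).Nodup :=
        ((List.filter_sublist (l := U)).map Prod.fst).nodup hUnd
      have hc := List.toFinset_card_of_nodup hndres
      have hicc : (Finset.Icc 1 n).filter (fun a => decide (n-k < a) = true)
          = Finset.Icc (n-k+1) n := by
        ext a; simp only [Finset.mem_filter, Finset.mem_Icc, decide_eq_true_eq]; omega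
      rw [map_fst_res, List.toFinset_filter, hUtf, hicc] at hc
      have hc2 : ((res (n-k) U).map Prod.fst).length = (res (n-k) U).length :=
        List.length_map _
      rw [map_fst_res] at hc2
      rw [Nat.card_Icc] at hc
      omega
    exact (hsub2.eq_of_length (by omega)).symm
  · intro hres
    rw [← hres]
    exact List.filter_sublist

/-- iterated insertion lemma for `χ_{1,h}`:
`W` is a colored word on `{n-k+1,…,n}`. -/
theorem insertion_chi_one_iterated (r n k h : ℕ) (ζ q : ℂ)
    (hr : 1 ≤ r) (hn : 1 ≤ n) (hζ : IsPrimitiveRoot ζ r)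
    (hk1 : 1 ≤ k) (hk2 : k ≤ n - 1) (hh : h < r)
    (W : List (ℕ × ℕ)) (hW : IsColoredWordOn r (Finset.Icc (n - k + 1) n) W) :
    ∑ π ∈ Finset.univ.filter (fun π : GP r n => W.Sublist (window π)),
      chi 1 ζ h (window π) * q ^ fmaj r (window π)
    = chi 1 ζ h W * q ^ fmaj r W *
        ∏ j ∈ Finset.Icc (k + 1) n, qnum (j * r) (ζ ^ h * q) := by
  obtain ⟨hWnd, hWtf, hWcol⟩ := hW
  have hkn : k ≤ n := by omega
  have hζr : ζ ^ r = 1 := hζ.pow_eq_one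
  have hchi : ∀ l : List (ℕ×ℕ), chi 1 ζ h l = ζ^(h*colSum l) := by
    intro l; rw [chi, one_pow, one_mul]
  have hlW : W.length = k := by
    have hc := List.toFinset_card_of_nodup hWnd
    rw [hWtf] at hc
    simp only [Nat.card_Icc, List.length_map] at hc
    omega
  have hsum1 : (∑ π ∈ Finset.univ.filter (fun π : GP r n => W.Sublist (window π)),
      chi 1 ζ h (window π) * q ^ fmaj r (window π))
      = ∑ U ∈ (Finset.univ.filter (fun π : GP r n => W.Sublist (window π))).image window,
          ζ^(h*colSum U) * q^(fmaj r U) := by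
    rw [Finset.sum_image (fun x _ y _ hxy => window_injective hxy)]
    exact Finset.sum_congr rfl (fun π _ => by rw [hchi])
  rw [hsum1]
  have himg : (Finset.univ.filter (fun π : GP r n => W.Sublist (window π))).image window
      = ((Finset.univ : Finset (GP r n)).image window).filter
          (fun U => res (n-k) U = W) := by
    ext U
    simp only [Finset.mem_image, Finset.mem_filter, Finset.mem_univ, true_and]
    constructor
    · rintro ⟨π, hsub, rfl⟩
      exact ⟨⟨π, rfl⟩, (sublist_iff_res n k hk1 hkn W (window π) hWtf hWnd
        (window_fst_nodup π) (window_fst_toFinset π)).mp hsub⟩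
    · rintro ⟨⟨π, rfl⟩, hres⟩
      exact ⟨π, (sublist_iff_res n k hk1 hkn W (window π) hWtf hWnd
        (window_fst_nodup π) (window_fst_toFinset π)).mpr hres, rfl⟩
  rw [himg]
  rw [main_sum r n h ζ q (n-k) W (by omega) hWnd (by rw [hWtf]) hWcol]
  rw [F_eval r h ζ q hζr (n-k) W (fun v hv => by
    have hmm : v.1 ∈ (W.map Prod.fst).toFinset := by
      rw [List.mem_toFinset, List.mem_map]; exact ⟨v, hv, rfl⟩
    rw [hWtf, Finset.mem_Icc] at hmm
    omega)]
  rw [hchi W, hlW]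
  congr 1
  rw [show Finset.Icc (k+1) n = Finset.Ico (k+1) (n+1) from (Finset.Ico_add_one_right_eq_Icc ..).symm,
      Finset.prod_Ico_eq_prod_range,
      show n + 1 - (k+1) = n - k from by omega]
end

section
/- For every permutation w of {1,…,n}, every ε ∈ {1,−1}, and every q ∈ ℂ, ∑_{π ∈ G*_{r,n}, |π| = w} ε^{inv(|π|)} q^{Dmaj(π)} = ε^{inv(w)} · q^{maj(w)} · ∏_{j=1}^{n−1} [r]_{q^j}. -/
open Finset

open scoped Classical

/-- The major index of a list of naturals: the sum of the (1-indexed) positions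
`i` with `l_i > l_{i+1}`. -/
def majL (l : List ℕ) : ℕ :=
  ∑ i ∈ Finset.range (l.length - 1),
    if l.getD (i + 1) 0 < l.getD i 0 then i + 1 else 0

/-- The one-line notation of a permutation of `Fin n`, as a list of values in
`{1,…,n}`. -/
def permList {n : ℕ} (w : Equiv.Perm (Fin n)) : List ℕ :=
  (List.finRange n).map fun i => (w i : ℕ) + 1

/-- The window of `π` with the color of its last entry replaced by `0`;
`Dmaj(π) = fmaj` of this word. -/
def windowD {r n : ℕ} (π : GP r n) : List (ℕ × ℕ) :=
  (List.finRange n).map fun i =>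
    ((π.1 i : ℕ) + 1, if (i : ℕ) = n - 1 then 0 else (π.2 i : ℕ))

----------------------------------------------------------------------
-- auxiliary definitions

/-- value `w_k + 1` as a function on ℕ -/
def Wv {n : ℕ} (w : Equiv.Perm (Fin n)) (k : ℕ) : ℕ :=
  if h : k < n then (w ⟨k, h⟩ : ℕ) + 1 else 0
/-- descent indicator of `w` at position `i` -/
def Dv {n : ℕ} (w : Equiv.Perm (Fin n)) (i : ℕ) : ℕ :=
  if Wv w (i + 1) < Wv w i then 1 else 0
/-- colors of `π` -/
def Zv {r n : ℕ} (π : GP r n) (k : ℕ) : ℕ :=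
  if h : k < n then (π.2 ⟨k, h⟩ : ℕ) else 0
/-- colors of `windowD π` -/
def Yv {r n : ℕ} (π : GP r n) (k : ℕ) : ℕ :=
  if k = n - 1 then 0 else Zv π k
/-- the triangular statistic -/
def Cv {r n : ℕ} (w : Equiv.Perm (Fin n)) (π : GP r n) (i : ℕ) : ℕ :=
  (Yv π i + (r - Yv π (i + 1)) + (r - Dv w i)) % r
/-- partial sums used for the inverse map -/
def Scv {n : ℕ} (r : ℕ) (w : Equiv.Perm (Fin n)) (c : Fin (n - 1) → Fin r) (k : ℕ) : ℕ :=
  ∑ j ∈ Finset.Ico k (n - 1), ((if h : j < n - 1 then (c ⟨j, h⟩ : ℕ) else 0) + Dv w j)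

lemma permList_length {n : ℕ} (w : Equiv.Perm (Fin n)) : (permList w).length = n := by
  simp [permList]

lemma permList_getD {n : ℕ} (w : Equiv.Perm (Fin n)) (k : ℕ) (hk : k < n) :
    (permList w).getD k 0 = Wv w k := by
  rw [permList, List.getD_eq_getElem _ _ (by simpa using hk)]
  simp [Wv, hk]

lemma majL_permList {n : ℕ} (w : Equiv.Perm (Fin n)) :
    majL (permList w) = ∑ i ∈ Finset.range (n - 1), (i + 1) * Dv w i := by
  rw [majL, permList_length]
  refine Finset.sum_congr rfl fun i hi => ?_
  have hi' : i < n - 1 := Finset.mem_range.mp hi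
  rw [permList_getD w i (by omega), permList_getD w (i+1) (by omega)]
  by_cases h : Wv w (i+1) < Wv w i <;> simp [Dv, h]

lemma absList_window {r n : ℕ} (π : GP r n) (w : Equiv.Perm (Fin n)) (hw : π.1 = w) :
    absList (window π) = permList w := by
  simp [absList, window, permList, hw]

lemma windowD_length {r n : ℕ} (π : GP r n) : (windowD π).length = n := by simp [windowD]

lemma windowD_getD {r n : ℕ} (π : GP r n) (w : Equiv.Perm (Fin n)) (hw : π.1 = w)
    (k : ℕ) (hk : k < n) :
    (windowD π).getD k (0,0) = (Wv w k, Yv π k) := by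
  rw [windowD, List.getD_eq_getElem _ _ (by simpa using hk)]
  simp [Wv, Yv, Zv, hk, hw]

lemma colSum_windowD {r n : ℕ} (π : GP r n) :
    colSum (windowD π) = ∑ k ∈ Finset.range n, Yv π k := by
  rw [colSum, windowD, List.map_map]
  rw [← Fin.sum_univ_eq_sum_range (fun k => Yv π k) n, Fin.sum_univ_def]
  congr 1
  refine List.map_congr_left fun i _ => ?_
  simp [Yv, Zv, i.isLt]

lemma colSum_window {r n : ℕ} (π : GP r n) :
    colSum (window π) = ∑ k ∈ Finset.range n, Zv π k := by
  rw [colSum, window, List.map_map]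
  rw [← Fin.sum_univ_eq_sum_range (fun k => Zv π k) n, Fin.sum_univ_def]
  congr 1
  refine List.map_congr_left fun i _ => ?_
  simp [Zv, i.isLt]

/-- the per-position arithmetic key lemma -/
lemma keyPos (r a b d : ℕ) (hr : 0 < r) (ha : a < r) (hb : b < r) (hd : d ≤ 1) :
    r * (if a < b ∨ (a = b ∧ d = 1) then 1 else 0) + a
      = d + (a + (r - b) + (r - d)) % r + b := by
  set m := a + (r - b) + (r - d) with hm
  rcases lt_trichotomy a b with h | h | h
  · have hF : (a < b ∨ (a = b ∧ d = 1)) := Or.inl h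
    rw [if_pos hF]
    have h1 : r ≤ m := by omega
    rw [Nat.mod_eq_sub_mod h1, Nat.mod_eq_of_lt (by omega)]
    omega
  · subst h
    rcases Nat.le_one_iff_eq_zero_or_eq_one.mp hd with rfl | rfl
    · rw [if_neg (by omega)]
      have h1 : r ≤ m := by omega
      rw [Nat.mod_eq_sub_mod h1, Nat.mod_eq_sub_mod (by omega), Nat.mod_eq_of_lt (by omega)]
      omega
    · rw [if_pos (Or.inr ⟨rfl, rfl⟩)]
      have h1 : r ≤ m := by omega
      rw [Nat.mod_eq_sub_mod h1, Nat.mod_eq_of_lt (by omega)]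
      omega
  · rw [if_neg (by omega)]
    have h1 : r ≤ m := by omega
    rw [Nat.mod_eq_sub_mod h1, Nat.mod_eq_sub_mod (by omega), Nat.mod_eq_of_lt (by omega)]
    omega

/-- shift lemma -/
lemma shiftSum (n : ℕ) (hn : 1 ≤ n) (y : ℕ → ℕ) (hy : y (n-1) = 0) :
    ∑ i ∈ Finset.range (n-1), (i+1) * y (i+1) = ∑ k ∈ Finset.range (n-1), k * y k := by
  obtain ⟨m, rfl⟩ : ∃ m, n = m + 1 := ⟨n - 1, by omega⟩
  simp only [Nat.add_sub_cancel] at *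
  have h1 := Finset.sum_range_succ' (fun k => k * y k) m
  have h2 := Finset.sum_range_succ (fun k => k * y k) m
  simp only [hy, Nat.zero_mul, Nat.mul_zero, add_zero, zero_mul, mul_zero] at h1 h2
  omega

lemma fmaj_windowD {r n : ℕ} (hr : 0 < r) (hn : 1 ≤ n) (π : GP r n)
    (w : Equiv.Perm (Fin n)) (hw : π.1 = w) :
    fmaj r (windowD π)
      = majL (permList w) + ∑ i ∈ Finset.range (n-1), (i + 1) * Cv w π i := by
  have hY : ∀ k, Yv π k < r := by
    intro k
    unfold Yv Zv
    split
    · exact hr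
    · split
      · exact (π.2 _).isLt
      · exact hr
  have hD : ∀ i, Dv w i ≤ 1 := by intro i; unfold Dv; split <;> omega
  -- pointwise identity, multiplied by (i+1)
  have main : ∀ i ∈ Finset.range (n-1),
      r * (if Flt ((windowD π).getD (i+1) (0,0)) ((windowD π).getD i (0,0)) then i+1 else 0)
        + (i+1) * Yv π i
      = (i+1) * Dv w i + (i+1) * Cv w π i + (i+1) * Yv π (i+1) := by
    intro i hi
    have hi' : i < n - 1 := Finset.mem_range.mp hi
    rw [windowD_getD π w hw i (by omega), windowD_getD π w hw (i+1) (by omega)]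
    have hkey := keyPos r (Yv π i) (Yv π (i+1)) (Dv w i) hr (hY i) (hY (i+1)) (hD i)
    have hFlt : Flt (Wv w (i+1), Yv π (i+1)) (Wv w i, Yv π i)
        ↔ (Yv π i < Yv π (i+1) ∨ (Yv π i = Yv π (i+1) ∧ Dv w i = 1)) := by
      unfold Flt Dv
      constructor
      · rintro (h | ⟨h1, h2⟩)
        · exact Or.inl h
        · exact Or.inr ⟨h1.symm, by simp [h2]⟩
      · rintro (h | ⟨h1, h2⟩)
        · exact Or.inl h
        · refine Or.inr ⟨h1.symm, ?_⟩
          by_contra hc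
          simp [hc] at h2
    by_cases hF : (Yv π i < Yv π (i+1) ∨ (Yv π i = Yv π (i+1) ∧ Dv w i = 1))
    · rw [if_pos (hFlt.mpr hF)]
      rw [if_pos hF] at hkey
      unfold Cv
      nlinarith [hkey]
    · rw [if_neg (fun hc => hF (hFlt.mp hc))]
      rw [if_neg hF] at hkey
      unfold Cv
      nlinarith [hkey]
  have hsum := Finset.sum_congr rfl main
  rw [Finset.sum_add_distrib, Finset.sum_add_distrib, Finset.sum_add_distrib] at hsum
  rw [← Finset.mul_sum] at hsum
  -- identify pieces
  have hmf : majF (windowD π)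
      = ∑ i ∈ Finset.range (n-1),
          (if Flt ((windowD π).getD (i+1) (0,0)) ((windowD π).getD i (0,0)) then i+1 else 0) := by
    rw [majF, windowD_length]
  have hcs : colSum (windowD π) = ∑ k ∈ Finset.range (n-1), Yv π k := by
    rw [colSum_windowD]
    obtain ⟨m, rfl⟩ : ∃ m, n = m + 1 := ⟨n - 1, by omega⟩
    rw [Finset.sum_range_succ]
    simp [Yv]
  have hYlast : Yv π (n-1) = 0 := by simp [Yv]
  have hshift := shiftSum n hn (Yv π) hYlast
  have hsplit : ∑ i ∈ Finset.range (n-1), (i+1) * Yv π i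
      = (∑ i ∈ Finset.range (n-1), i * Yv π i) + ∑ i ∈ Finset.range (n-1), Yv π i := by
    rw [← Finset.sum_add_distrib]
    exact Finset.sum_congr rfl fun i _ => by ring
  rw [fmaj, hmf, hcs, majL_permList]
  omega

lemma nat_eq_of_cast {r : ℕ} (hr : 0 < r) {a b : ℕ} (ha : a < r) (hb : b < r)
    (h : (a : ZMod r) = (b : ZMod r)) : a = b := by
  haveI : NeZero r := ⟨hr.ne'⟩
  rw [← ZMod.val_cast_of_lt ha, ← ZMod.val_cast_of_lt hb, h]

lemma lastzero (r A : ℕ) (hr : 0 < r) : (A + (r - A % r) % r) % r = 0 := by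
  have h1 : A % r < r := Nat.mod_lt _ hr
  rcases Nat.eq_zero_or_pos (A % r) with h | h
  · rw [h, Nat.sub_zero, Nat.mod_self, Nat.add_zero, h]
  · have h2 : (r - A % r) % r = r - A % r := Nat.mod_eq_of_lt (by omega)
    rw [h2]
    have h3 : A + (r - A % r) = (A - A % r) + r := by
      have := Nat.mod_le A r; omega
    rw [h3, Nat.add_mod_right]
    have h4 : A - A % r = r * (A / r) := by
      have := Nat.mod_add_div A r; omega
    rw [h4, Nat.mul_mod_right]

lemma lastfix (r A z : ℕ) (hr : 0 < r) (hz : z < r) (h : (A + z) % r = 0) :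
    (r - A % r) % r = z := by
  have h1 : A % r < r := Nat.mod_lt _ hr
  have hz' : z % r = z := Nat.mod_eq_of_lt hz
  rw [Nat.add_mod, hz'] at h
  rcases Nat.eq_zero_or_pos (A % r) with h0 | h0
  · rw [h0, Nat.zero_add, hz'] at h
    rw [h0, h, Nat.sub_zero, Nat.mod_self]
  · have h3 : A % r + z = r := by
      rcases lt_or_ge (A % r + z) r with hlt | hge
      · rw [Nat.mod_eq_of_lt hlt] at h; omega
      · rw [Nat.mod_eq_sub_mod hge, Nat.mod_eq_of_lt (by omega)] at h; omega
    rw [Nat.mod_eq_of_lt (by omega)]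
    omega

def Phi {r n : ℕ} (hr : 0 < r) (w : Equiv.Perm (Fin n)) (π : GP r n) :
    Fin (n-1) → Fin r := fun i => ⟨Cv w π i, Nat.mod_lt _ hr⟩

def Psi {r n : ℕ} (hr : 0 < r) (w : Equiv.Perm (Fin n)) (c : Fin (n-1) → Fin r) :
    GP r n :=
  (w, fun k => if _ : (k : ℕ) < n - 1 then ⟨Scv r w c k % r, Nat.mod_lt _ hr⟩
      else ⟨(r - (∑ t ∈ Finset.range (n-1), Scv r w c t % r) % r) % r, Nat.mod_lt _ hr⟩)

lemma hYlt {r n : ℕ} (hr : 0 < r) (π : GP r n) (k : ℕ) : Yv π k < r := by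
  unfold Yv Zv
  split
  · exact hr
  · split
    · exact (π.2 _).isLt
    · exact hr

lemma hDle {n : ℕ} (w : Equiv.Perm (Fin n)) (i : ℕ) : Dv w i ≤ 1 := by
  unfold Dv; split <;> omega

lemma cast_Cv {r n : ℕ} (hr : 0 < r) (w : Equiv.Perm (Fin n)) (π : GP r n) (i : ℕ) :
    ((Cv w π i : ℕ) : ZMod r)
      = (Yv π i : ZMod r) - (Yv π (i+1) : ZMod r) - (Dv w i : ZMod r) := by
  haveI : NeZero r := ⟨hr.ne'⟩
  rw [Cv, ZMod.natCast_mod]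
  have h1 : Yv π (i+1) ≤ r := le_of_lt (hYlt hr π (i+1))
  have h2 : Dv w i ≤ r := le_trans (hDle w i) hr
  push_cast [Nat.cast_sub h1, Nat.cast_sub h2]
  rw [ZMod.natCast_self]
  ring

lemma Scv_succ {r n : ℕ} (w : Equiv.Perm (Fin n)) (c : Fin (n-1) → Fin r)
    (k : ℕ) (hk : k < n - 1) :
    Scv r w c k = ((c ⟨k, hk⟩ : ℕ) + Dv w k) + Scv r w c (k+1) := by
  rw [Scv, Finset.sum_eq_sum_Ico_succ_bot hk, dif_pos hk]
  rfl

lemma Scv_last {r n : ℕ} (w : Equiv.Perm (Fin n)) (c : Fin (n-1) → Fin r) :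
    Scv r w c (n-1) = 0 := by
  rw [Scv, Finset.Ico_self, Finset.sum_empty]

/-- telescoping: `Scv` of `Phi π` recovers the colors of `π` (mod r). -/
lemma Scv_Phi_cast {r n : ℕ} (hr : 0 < r) (w : Equiv.Perm (Fin n)) (π : GP r n) :
    ∀ t k, k + t = n - 1 → ((Scv r w (Phi hr w π) k : ℕ) : ZMod r) = (Yv π k : ZMod r) := by
  intro t
  induction t with
  | zero =>
    intro k hk
    rw [Nat.add_zero] at hk
    subst hk
    rw [Scv_last]
    simp [Yv]
  | succ t ih =>
    intro k hk
    have hk' : k < n - 1 := by omega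
    rw [Scv_succ w _ k hk']
    push_cast
    rw [ih (k+1) (by omega)]
    have : ((Phi hr w π ⟨k, hk'⟩ : ℕ) : ZMod r)
        = (Yv π k : ZMod r) - (Yv π (k+1) : ZMod r) - (Dv w k : ZMod r) := by
      show ((Cv w π k : ℕ) : ZMod r) = _
      exact cast_Cv hr w π k
    rw [this]
    ring

lemma Scv_Phi_mod {r n : ℕ} (hr : 0 < r) (w : Equiv.Perm (Fin n)) (π : GP r n)
    (k : ℕ) (hk : k ≤ n - 1) :
    Scv r w (Phi hr w π) k % r = Yv π k := by
  refine nat_eq_of_cast hr (Nat.mod_lt _ hr) (hYlt hr π k) ?_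
  haveI : NeZero r := ⟨hr.ne'⟩
  rw [ZMod.natCast_mod]
  exact Scv_Phi_cast hr w π (n - 1 - k) k (by omega)

/-- the colors of `Psi c` at positions `≤ n-1` are `Scv c · % r`. -/
lemma Yv_Psi {r n : ℕ} (hr : 0 < r) (hn : 1 ≤ n) (w : Equiv.Perm (Fin n))
    (c : Fin (n-1) → Fin r) (k : ℕ) (hk : k ≤ n - 1) :
    Yv (Psi hr w c) k = Scv r w c k % r := by
  rcases eq_or_lt_of_le hk with h | h
  · rw [Yv, if_pos h, h, Scv_last, Nat.zero_mod]
  · rw [Yv, if_neg (by omega), Zv, dif_pos (by omega), Psi]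
    simp only
    rw [dif_pos h]

lemma Phi_Psi {r n : ℕ} (hr : 0 < r) (hn : 1 ≤ n) (w : Equiv.Perm (Fin n))
    (c : Fin (n-1) → Fin r) : Phi hr w (Psi hr w c) = c := by
  haveI : NeZero r := ⟨hr.ne'⟩
  funext i
  apply Fin.ext
  show Cv w (Psi hr w c) (i : ℕ) = (c i : ℕ)
  refine nat_eq_of_cast hr (Nat.mod_lt _ hr) (c i).isLt ?_
  rw [cast_Cv hr w (Psi hr w c) i]
  rw [Yv_Psi hr hn w c i (by omega), Yv_Psi hr hn w c ((i:ℕ)+1) (by omega)]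
  rw [ZMod.natCast_mod, ZMod.natCast_mod]
  rw [Scv_succ w c (i : ℕ) i.isLt]
  push_cast
  ring_nf

lemma Psi_mem {r n : ℕ} (hr : 0 < r) (hn : 1 ≤ n) (w : Equiv.Perm (Fin n))
    (c : Fin (n-1) → Fin r) :
    (Psi hr w c).1 = w ∧ colSum (window (Psi hr w c)) % r = 0 := by
  refine ⟨rfl, ?_⟩
  rw [colSum_window]
  obtain ⟨m, rfl⟩ : ∃ m, n = m + 1 := ⟨n - 1, by omega⟩
  rw [Finset.sum_range_succ]
  have hm : ∀ k < m, Zv (Psi hr w c) k = Scv r w c k % r := by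
    intro k hk
    have := Yv_Psi hr hn w c k (by omega)
    rwa [Yv, if_neg (by omega)] at this
  have hlast : Zv (Psi hr w c) m
      = (r - (∑ t ∈ Finset.range ((m+1)-1), Scv r w c t % r) % r) % r := by
    rw [Zv, dif_pos (by omega), Psi]
    simp only
    rw [dif_neg (by omega)]
  rw [hlast, Finset.sum_congr rfl (fun k hk => hm k (Finset.mem_range.mp hk))]
  have := lastzero r (∑ t ∈ Finset.range ((m+1)-1), Scv r w c t % r) hr
  simpa using this

lemma Psi_Phi {r n : ℕ} (hr : 0 < r) (hn : 1 ≤ n) (w : Equiv.Perm (Fin n))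
    (π : GP r n) (hw : π.1 = w) (hcol : colSum (window π) % r = 0) :
    Psi hr w (Phi hr w π) = π := by
  refine Prod.ext hw.symm ?_
  funext k
  apply Fin.ext
  rw [Psi]
  simp only
  by_cases hk : (k : ℕ) < n - 1
  · rw [dif_pos hk]
    show Scv r w (Phi hr w π) (k : ℕ) % r = (π.2 k : ℕ)
    rw [Scv_Phi_mod hr w π k (by omega)]
    rw [Yv, if_neg (by omega), Zv, dif_pos k.isLt]
  · rw [dif_neg hk]
    show (r - (∑ t ∈ Finset.range (n-1), Scv r w (Phi hr w π) t % r) % r) % r = (π.2 k : ℕ)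
    have hkv : (k : ℕ) = n - 1 := by have := k.isLt; omega
    have hsum : ∀ t ∈ Finset.range (n-1), Scv r w (Phi hr w π) t % r = Zv π t := by
      intro t ht
      have ht' : t < n - 1 := Finset.mem_range.mp ht
      rw [Scv_Phi_mod hr w π t (by omega), Yv, if_neg (by omega)]
    rw [Finset.sum_congr rfl hsum]
    rw [colSum_window] at hcol
    obtain ⟨m, hnm⟩ : ∃ m, n = m + 1 := ⟨n - 1, by omega⟩
    subst hnm
    rw [Finset.sum_range_succ] at hcol
    simp only [Nat.add_sub_cancel] at *
    have hzlt : Zv π m < r := by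
      rw [Zv, dif_pos (by omega)]; exact (π.2 _).isLt
    have := lastfix r (∑ t ∈ Finset.range m, Zv π t) (Zv π m) hr hzlt hcol
    rw [this, Zv, dif_pos (by omega)]
    have hk2 : k = ⟨m, by omega⟩ := Fin.ext (by simpa using hkv)
    rw [hk2]

/-- the `Dmaj` generating function over the fiber
`{π ∈ G*_{r,n} : |π| = w}`. -/
theorem Dmaj_fiber (r n : ℕ) (ε q : ℂ)
    (hr : 1 ≤ r) (hn : 1 ≤ n) (hε : ε = 1 ∨ ε = -1)
    (w : Equiv.Perm (Fin n)) :
    ∑ π ∈ Finset.univ.filter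
        (fun π : GP r n => π.1 = w ∧ colSum (window π) % r = 0),
      ε ^ invNum (absList (window π)) * q ^ fmaj r (windowD π)
    = ε ^ invNum (permList w) * q ^ majL (permList w) *
        ∏ j ∈ Finset.Icc 1 (n - 1), qnum r (q ^ j) := by
  have hr' : 0 < r := hr
  have step1 :
      ∑ π ∈ Finset.univ.filter
          (fun π : GP r n => π.1 = w ∧ colSum (window π) % r = 0),
        ε ^ invNum (absList (window π)) * q ^ fmaj r (windowD π)
      = ∑ c ∈ (Finset.univ : Finset (Fin (n-1) → Fin r)),
          ε ^ invNum (permList w) *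
            (q ^ majL (permList w) * ∏ i : Fin (n-1), (q ^ ((i:ℕ)+1)) ^ ((c i : ℕ))) := by
    refine Finset.sum_nbij' (fun π => Phi hr' w π) (fun c => Psi hr' w c)
      (fun π _ => Finset.mem_univ _) ?_ ?_ ?_ ?_
    · intro c _
      simp only [Finset.mem_filter, Finset.mem_univ, true_and]
      exact Psi_mem hr' hn w c
    · intro π hπ
      simp only [Finset.mem_filter, Finset.mem_univ, true_and] at hπ
      exact Psi_Phi hr' hn w π hπ.1 hπ.2
    · intro c _
      exact Phi_Psi hr' hn w c
    · intro π hπ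
      simp only [Finset.mem_filter, Finset.mem_univ, true_and] at hπ
      rw [absList_window π w hπ.1, fmaj_windowD hr' hn π w hπ.1]
      rw [pow_add]
      congr 2
      rw [← Finset.prod_pow_eq_pow_sum]
      rw [← Fin.prod_univ_eq_prod_range (fun i => q ^ ((i+1) * Cv w π i)) (n-1)]
      refine Finset.prod_congr rfl fun i _ => ?_
      rw [pow_mul]
      rfl
  rw [step1]
  rw [← Finset.mul_sum]
  have step2 :
      ∑ c ∈ (Finset.univ : Finset (Fin (n-1) → Fin r)),
        (q ^ majL (permList w) * ∏ i : Fin (n-1), (q ^ ((i:ℕ)+1)) ^ ((c i : ℕ)))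
      = q ^ majL (permList w) *
          ∏ i : Fin (n-1), qnum r (q ^ ((i:ℕ)+1)) := by
    rw [← Finset.mul_sum]
    congr 1
    have := Finset.prod_univ_sum (fun _ : Fin (n-1) => (Finset.univ : Finset (Fin r)))
      (fun i x => (q ^ ((i:ℕ)+1)) ^ ((x : ℕ)))
    rw [Fintype.piFinset_univ] at this
    rw [← this]
    refine Finset.prod_congr rfl fun i _ => ?_
    rw [qnum, ← Fin.sum_univ_eq_sum_range (fun j => (q ^ ((i:ℕ)+1)) ^ j) r]
  rw [step2, ← mul_assoc]
  congr 1
  rw [Fin.prod_univ_eq_prod_range (fun i => qnum r (q ^ (i+1))) (n-1)]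
  rw [← Finset.Ico_add_one_right_eq_Icc]
  have h1 : n - 1 + 1 = n := by omega
  rw [h1, Finset.prod_Ico_eq_prod_range]
  refine Finset.prod_congr rfl fun i _ => ?_
  rw [Nat.add_comm 1 i]
end
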